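/- Let n ≥ 1, let A be an n×n real matrix, let γ be an invertible n×n real matrix, and let ρ ≥ 0 be such that I + uA is invertible for every u in [0, ρ]. Set v(ρ) := det(I + ρA). Then v(ρ) · ∫₀^ρ ( γ·(I + uA)² )⁻¹ du = ( Σ_{k=1}^{n} ρ^k T_{k−1}(A) ) · γ⁻¹. -/

import Mathlib

open Polynomial MeasureTheory

/-- `σ_m(A)`: the coefficient of `t^m` in the polynomial `det (I + t A)`, i.e. the `m`-th
elementary symmetric function of the eigenvalues of `A`. -/
noncomputable def sigmaCoeff {n : ℕ} (A : Matrix (Fin n) (Fin n) ℝ) (m : ℕ) : ℝ :=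
  ((1 + (Polynomial.X : Polynomial ℝ) • A.map Polynomial.C).det).coeff m

/-- The `k`-th Newton transformation `T_k(A) = Σ_{j=0}^{k} (−1)^j σ_{k−j}(A) A^j`. -/
noncomputable def newtonT {n : ℕ} (A : Matrix (Fin n) (Fin n) ℝ) (k : ℕ) :
    Matrix (Fin n) (Fin n) ℝ :=
  ∑ j ∈ Finset.range (k + 1), ((-1 : ℝ) ^ j * sigmaCoeff A (k - j)) • A ^ j

/-! ### Auxiliary algebraic lemmas -/

section Aux

attribute [local instance] Matrix.linftyOpNormedRing Matrix.linftyOpNormedAlgebra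
  Matrix.linftyOpNormedSpace

variable {n : ℕ} (A : Matrix (Fin n) (Fin n) ℝ)

lemma eval_detPoly (t : ℝ) :
    ((1 + (X : ℝ[X]) • A.map C).det).eval t = (1 + t • A).det := by
  have h := (evalRingHom t).map_det (1 + (X : ℝ[X]) • A.map C)
  have h2 : (evalRingHom t).mapMatrix (1 + (X : ℝ[X]) • A.map C) = 1 + t • A := by
    ext i j
    simp [Matrix.add_apply, Matrix.smul_apply, Matrix.map_apply, Matrix.one_apply]
    split <;> simp [mul_comm]
  rw [h2] at h
  simpa using h

lemma eval_charpolyR (t : ℝ) : (A.charpoly).eval t = (t • 1 - A).det := by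
  have h := (evalRingHom t).map_det A.charmatrix
  have h2 : (evalRingHom t).mapMatrix A.charmatrix = t • 1 - A := by
    ext i j
    simp [Matrix.charmatrix_apply, Matrix.sub_apply, Matrix.smul_apply, Matrix.map_apply,
      Matrix.one_apply, Matrix.diagonal_apply]
    split <;> simp
  rw [h2] at h
  simpa [Matrix.charpoly] using h

lemma detPoly_eq :
    (1 + (X : ℝ[X]) • A.map C).det
      = ∑ m ∈ Finset.range (n + 1), C ((-1 : ℝ) ^ m * A.charpoly.coeff (n - m)) * X ^ m := by
  set P := (1 + (X : ℝ[X]) • A.map C).det with hPdef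
  set R := ∑ m ∈ Finset.range (n + 1), C ((-1 : ℝ) ^ m * A.charpoly.coeff (n - m)) * X ^ m
    with hRdef
  have hdeg : A.charpoly.natDegree = n := by
    simpa using A.charpoly_natDegree_eq_dim
  have key : ∀ t : ℝ, t ≠ 0 → P.eval t = R.eval t := by
    intro t ht
    have hP : P.eval t = (1 + t • A).det := eval_detPoly A t
    have h1 : ((-t⁻¹) • (1 + t • A) : Matrix (Fin n) (Fin n) ℝ) = (-t⁻¹) • 1 - A := by
      rw [smul_add, smul_smul]
      have h0 : -t⁻¹ * t = -1 := by field_simp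
      rw [h0, sub_eq_add_neg, neg_one_smul]
    have hQ : (1 + t • A).det = (-t) ^ n * (A.charpoly).eval (-t⁻¹) := by
      rw [eval_charpolyR, ← h1, Matrix.det_smul, Fintype.card_fin, ← mul_assoc, ← mul_pow]
      have h0 : -t * -t⁻¹ = 1 := by field_simp
      rw [h0, one_pow, one_mul]
    have hQe : (A.charpoly).eval (-t⁻¹)
        = ∑ j ∈ Finset.range (n + 1), A.charpoly.coeff j * (-t⁻¹) ^ j := by
      rw [eval_eq_sum_range' (by omega : A.charpoly.natDegree < n + 1)]
    have hR : R.eval t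
        = ∑ m ∈ Finset.range (n + 1), (-1 : ℝ) ^ m * A.charpoly.coeff (n - m) * t ^ m := by
      simp [hRdef, eval_finset_sum]
    rw [hP, hQ, hQe, hR, Finset.mul_sum, ← Finset.sum_range_reflect]
    apply Finset.sum_congr rfl
    intro j hj
    have hj' : j ≤ n := by simp at hj; omega
    simp only [Nat.add_sub_cancel]
    have e1 : (-t) ^ n = (-t) ^ (n - j) * (-t) ^ j := by
      rw [← pow_add, Nat.sub_add_cancel hj']
    have e2 : (-t) ^ (n - j) * (-t⁻¹) ^ (n - j) = 1 := by
      rw [← mul_pow]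
      have h0 : -t * -t⁻¹ = 1 := by field_simp
      rw [h0, one_pow]
    rw [e1]
    calc (-t) ^ (n - j) * (-t) ^ j * (A.charpoly.coeff (n - j) * (-t⁻¹) ^ (n - j))
        = A.charpoly.coeff (n - j) * (-t) ^ j
            * ((-t) ^ (n - j) * (-t⁻¹) ^ (n - j)) := by ring
      _ = (-1 : ℝ) ^ j * A.charpoly.coeff (n - j) * t ^ j := by
          rw [e2, neg_pow]; ring
  have hinf : Set.Infinite {x : ℝ | (P - R).IsRoot x} := by
    apply Set.Infinite.mono (s := {x : ℝ | x ≠ 0})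
    · intro x hx
      simp only [Set.mem_setOf_eq, IsRoot, eval_sub]
      rw [key x hx, sub_self]
    · have h0 : ({(0 : ℝ)}ᶜ : Set ℝ).Infinite := (Set.finite_singleton 0).infinite_compl
      have h1 : {x : ℝ | x ≠ 0} = ({(0:ℝ)}ᶜ : Set ℝ) := by ext x; simp
      rw [h1]; exact h0
  exact sub_eq_zero.mp (Polynomial.eq_zero_of_infinite_isRoot _ hinf)

lemma sigmaCoeff_eq {m : ℕ} (hm : m ≤ n) :
    sigmaCoeff A m = (-1 : ℝ) ^ m * A.charpoly.coeff (n - m) := by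
  rw [sigmaCoeff, detPoly_eq, finset_sum_coeff]
  rw [Finset.sum_eq_single m]
  · simp only [← C_1, ← C_neg, ← C_pow, ← C_mul, coeff_C_mul, coeff_X_pow, if_pos rfl]
    simp
  · intro b _ hb
    simp only [← C_1, ← C_neg, ← C_pow, ← C_mul, coeff_C_mul, coeff_X_pow]
    rw [if_neg (Ne.symm hb), mul_zero]
  · intro h
    simp at h; omega

lemma newtonT_zero : newtonT A 0 = sigmaCoeff A 0 • 1 := by
  rw [newtonT, Finset.sum_range_one, pow_zero, pow_zero, one_mul, Nat.sub_zero]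

lemma newtonT_succ (k : ℕ) :
    newtonT A (k + 1) = sigmaCoeff A (k + 1) • 1 - A * newtonT A k := by
  rw [newtonT, Finset.sum_range_succ']
  simp only [pow_succ, Nat.add_sub_cancel, pow_zero, one_mul, Nat.sub_zero]
  rw [newtonT, Finset.mul_sum]
  have h : ∀ j, ((-1 : ℝ) ^ j * -1 * sigmaCoeff A (k + 1 - (j + 1))) • (A ^ j * A)
      = -(A * (((-1 : ℝ) ^ j * sigmaCoeff A (k - j)) • A ^ j)) := by
    intro j
    have hp : A ^ j * A = A * A ^ j := by rw [← pow_succ, ← pow_succ']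
    rw [hp, Nat.succ_sub_succ, Matrix.mul_smul, ← neg_smul]
    congr 1
    ring
  simp only [h, Finset.sum_neg_distrib]
  abel

lemma newtonT_mul_comm (k : ℕ) : newtonT A k * A = A * newtonT A k := by
  rw [newtonT, Finset.sum_mul, Finset.mul_sum]
  apply Finset.sum_congr rfl
  intro j _
  rw [Matrix.smul_mul, Matrix.mul_smul, ← pow_succ, ← pow_succ']

lemma newtonT_dim : newtonT A n = 0 := by
  have hdeg : A.charpoly.natDegree = n := by
    simpa using A.charpoly_natDegree_eq_dim
  have hCH : Polynomial.aeval A A.charpoly = 0 := A.aeval_self_charpoly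
  rw [Polynomial.aeval_eq_sum_range' (by omega : A.charpoly.natDegree < n + 1)] at hCH
  have h : newtonT A n = (-1 : ℝ) ^ n •
      ∑ j ∈ Finset.range (n + 1), A.charpoly.coeff j • A ^ j := by
    rw [newtonT, Finset.smul_sum]
    apply Finset.sum_congr rfl
    intro j hj
    have hj' : j ≤ n := by simp at hj; omega
    rw [sigmaCoeff_eq A (by omega : n - j ≤ n), Nat.sub_sub_self hj', smul_smul]
    congr 1
    rw [show (-1 : ℝ) ^ j * ((-1 : ℝ) ^ (n - j) * A.charpoly.coeff j)
        = ((-1 : ℝ) ^ j * (-1 : ℝ) ^ (n - j)) * A.charpoly.coeff j by ring,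
      ← pow_add, Nat.add_sub_cancel' hj']
  rw [h, hCH, smul_zero]

lemma det_expand (ρ : ℝ) :
    (1 + ρ • A).det = ∑ m ∈ Finset.range (n + 1), sigmaCoeff A m * ρ ^ m := by
  have hdeg : ((1 + (X : ℝ[X]) • A.map C).det).natDegree < n + 1 := by
    rw [detPoly_eq]
    have h := Polynomial.natDegree_sum_le (Finset.range (n + 1))
      (fun m => C ((-1 : ℝ) ^ m * A.charpoly.coeff (n - m)) * X ^ m)
    refine lt_of_le_of_lt h ?_
    rw [Finset.fold_max_lt]
    constructor
    · omega
    · intro m hm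
      simp only [Finset.mem_range] at hm
      calc (C ((-1 : ℝ) ^ m * A.charpoly.coeff (n - m)) * X ^ m).natDegree
          ≤ _ := Polynomial.natDegree_C_mul_le _ _
        _ ≤ m := Polynomial.natDegree_X_pow_le m
        _ < n + 1 := by omega
  have h := Polynomial.eval_eq_sum_range' hdeg ρ
  rw [eval_detPoly] at h
  exact h

lemma key_ident (ρ : ℝ) (N : ℕ) :
    (∑ m ∈ Finset.range N, ρ ^ m • newtonT A m) * (1 + ρ • A) + ρ ^ N • newtonT A N
      = ∑ m ∈ Finset.range (N + 1), (sigmaCoeff A m * ρ ^ m) • (1 : Matrix (Fin n) (Fin n) ℝ) := by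
  induction N with
  | zero => simp [newtonT_zero]
  | succ N ih =>
      rw [Finset.sum_range_succ, Finset.sum_range_succ
        (f := fun m => (sigmaCoeff A m * ρ ^ m) • (1 : Matrix (Fin n) (Fin n) ℝ)), ← ih]
      have hrec : ρ ^ N • (newtonT A N * (ρ • A)) + ρ ^ (N + 1) • newtonT A (N + 1)
          = (sigmaCoeff A (N + 1) * ρ ^ (N + 1)) • (1 : Matrix (Fin n) (Fin n) ℝ) := by
        have hc : newtonT A N * (ρ • A) = ρ • (A * newtonT A N) := by
          rw [Matrix.mul_smul, newtonT_mul_comm]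
        rw [hc, smul_smul, ← pow_succ, newtonT_succ, smul_sub, smul_smul,
          mul_comm (sigmaCoeff A (N + 1)) (ρ ^ (N + 1))]
        abel
      have expand : (∑ m ∈ Finset.range N, ρ ^ m • newtonT A m + ρ ^ N • newtonT A N)
            * (1 + ρ • A)
          = (∑ m ∈ Finset.range N, ρ ^ m • newtonT A m) * (1 + ρ • A)
            + (ρ ^ N • newtonT A N + ρ ^ N • (newtonT A N * (ρ • A))) := by
        rw [Matrix.add_mul]
        congr 1
        rw [Matrix.smul_mul, Matrix.mul_add, Matrix.mul_one, smul_add]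
      rw [expand, ← hrec]
      abel

/-! ### Analytic lemmas -/

lemma hasDerivAt_inv_affine {u : ℝ} (h : IsUnit (1 + u • A)) :
    HasDerivAt (fun v : ℝ => Ring.inverse (1 + v • A))
      (-(Ring.inverse (1 + u • A) * A * Ring.inverse (1 + u • A))) u := by
  have hc : HasDerivAt (fun v : ℝ => 1 + v • A) A u := by
    have := ((hasDerivAt_id' u).smul_const A).const_add (1 : Matrix (Fin n) (Fin n) ℝ)
    rwa [one_smul] at this
  have hd := (hasFDerivAt_ringInverse (𝕜 := ℝ) h.unit).comp_hasDerivAt u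
    (by exact hc)
  simp only [ContinuousLinearMap.neg_apply, ContinuousLinearMap.mulLeftRight_apply] at hd
  have hinv : (↑h.unit⁻¹ : Matrix (Fin n) (Fin n) ℝ) = Ring.inverse (1 + u • A) := by
    rw [← Ring.inverse_unit h.unit, IsUnit.unit_spec]
  rw [hinv] at hd
  exact hd

lemma hasDerivAt_F (γinv : Matrix (Fin n) (Fin n) ℝ) {u : ℝ} (h : IsUnit (1 + u • A)) :
    HasDerivAt (fun v : ℝ => (v • Ring.inverse (1 + v • A)) * γinv)
      (Ring.inverse (1 + u • A) * Ring.inverse (1 + u • A) * γinv) u := by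
  set N := Ring.inverse (1 + u • A) with hN
  have h1 : HasDerivAt (fun v : ℝ => v • Ring.inverse (1 + v • A))
      (u • (-(N * A * N)) + (1 : ℝ) • N) u :=
    (hasDerivAt_id u).smul (hasDerivAt_inv_affine A h)
  have h2 : u • (-(N * A * N)) + (1 : ℝ) • N = N * N := by
    have hNl : N * (1 + u • A) = 1 := Ring.inverse_mul_cancel _ h
    have h3 : N * N = N - u • (N * A * N) := by
      have e1 : (1 : Matrix (Fin n) (Fin n) ℝ) - u • (A * N) = N := by
        have hNr : (1 : Matrix (Fin n) (Fin n) ℝ) = N + u • (A * N) := by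
          have hNr' : (1 + u • A) * N = 1 := Ring.mul_inverse_cancel _ h
          calc (1 : Matrix (Fin n) (Fin n) ℝ) = (1 + u • A) * N := hNr'.symm
            _ = N + u • (A * N) := by
                rw [Matrix.add_mul, Matrix.one_mul, Matrix.smul_mul]
        rw [hNr]
        abel
      calc N * N = N * (1 - u • (A * N)) := by rw [e1]
        _ = N - u • (N * A * N) := by
            rw [Matrix.mul_sub, Matrix.mul_one, Matrix.mul_smul, Matrix.mul_assoc]
    rw [h3, smul_neg, one_smul]
    abel
  rw [h2] at h1
  exact h1.mul_const γinv

lemma continuousOn_inv2 (γinv : Matrix (Fin n) (Fin n) ℝ) {ρ : ℝ}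
    (hu : ∀ u ∈ Set.Icc (0 : ℝ) ρ, IsUnit (1 + u • A)) :
    ContinuousOn (fun u : ℝ =>
      Ring.inverse (1 + u • A) * Ring.inverse (1 + u • A) * γinv) (Set.Icc 0 ρ) := by
  have hc : ContinuousOn (fun u : ℝ => Ring.inverse (1 + u • A)) (Set.Icc 0 ρ) := by
    intro u huI
    have h1 : ContinuousAt (fun u : ℝ => 1 + u • A) u := by fun_prop
    have h2 : ContinuousAt Ring.inverse ((1 : Matrix (Fin n) (Fin n) ℝ) + u • A) := by
      have h3 := NormedRing.inverse_continuousAt (hu u huI).unit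
      rwa [IsUnit.unit_spec] at h3
    exact ContinuousWithinAt.comp (s := Set.Icc 0 ρ) (t := Set.univ)
      h2.continuousWithinAt h1.continuousWithinAt (Set.mapsTo_univ _ _)
  exact (hc.mul hc).mul continuousOn_const

lemma entry_integral (γinv : Matrix (Fin n) (Fin n) ℝ) {ρ : ℝ} (hρ : 0 ≤ ρ)
    (hu : ∀ u ∈ Set.Icc (0 : ℝ) ρ, IsUnit (1 + u • A)) (i j : Fin n) :
    ∫ u in (0 : ℝ)..ρ,
        (Ring.inverse (1 + u • A) * Ring.inverse (1 + u • A) * γinv) i j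
      = ((ρ • Ring.inverse (1 + ρ • A)) * γinv) i j := by
  classical
  let φ : Matrix (Fin n) (Fin n) ℝ →L[ℝ] ℝ :=
    LinearMap.toContinuousLinearMap (Matrix.entryLinearMap ℝ ℝ i j)
  have hderiv : ∀ u ∈ Set.uIcc (0 : ℝ) ρ,
      HasDerivAt (fun v : ℝ => φ ((v • Ring.inverse (1 + v • A)) * γinv))
        (φ (Ring.inverse (1 + u • A) * Ring.inverse (1 + u • A) * γinv)) u := by
    intro u huI
    rw [Set.uIcc_of_le hρ] at huI
    exact (φ.hasFDerivAt).comp_hasDerivAt u (hasDerivAt_F A γinv (hu u huI))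
  have hint : IntervalIntegrable
      (fun u : ℝ => φ (Ring.inverse (1 + u • A) * Ring.inverse (1 + u • A) * γinv))
      MeasureTheory.volume 0 ρ := by
    apply ContinuousOn.intervalIntegrable
    rw [Set.uIcc_of_le hρ]
    exact φ.continuous.comp_continuousOn (continuousOn_inv2 A γinv hu)
  have h := intervalIntegral.integral_eq_sub_of_hasDerivAt hderiv hint
  simp [φ, Matrix.entryLinearMap] at h ⊢
  exact h

end Aux

/-- With `v(ρ) = det (I + ρA)`, `γ` invertible and `I + uA` invertible
for `u ∈ [0, ρ]`, `ρ ≥ 0`, one has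
`v(ρ) · ∫₀^ρ (γ (I + uA)²)⁻¹ du = (Σ_{k=1}^{n} ρ^k T_{k−1}(A)) γ⁻¹`, the integral
being taken entrywise. -/
theorem det_smul_integral_inv_eq_newton_sum (n : ℕ) (hn : 1 ≤ n)
    (A γ : Matrix (Fin n) (Fin n) ℝ) (hγ : IsUnit γ)
    (ρ : ℝ) (hρ : 0 ≤ ρ)
    (hu : ∀ u ∈ Set.Icc (0 : ℝ) ρ, IsUnit (1 + u • A)) :
    (1 + ρ • A).det •
        (Matrix.of fun i j : Fin n => ∫ u in (0 : ℝ)..ρ, (((γ * (1 + u • A) ^ 2)⁻¹ : Matrix (Fin n) (Fin n) ℝ) i j))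
      = (∑ k ∈ Finset.Icc 1 n, ρ ^ k • newtonT A (k - 1)) * γ⁻¹ := by
  classical
  have hB : IsUnit (1 + ρ • A) := hu ρ ⟨hρ, le_refl _⟩
  -- Step 1: rewrite the integrand.
  have hintg : ∀ (i j : Fin n), (fun u : ℝ =>
        ((γ * (1 + u • A) ^ 2)⁻¹ : Matrix (Fin n) (Fin n) ℝ) i j)
      = fun u : ℝ =>
        (Ring.inverse (1 + u • A) * Ring.inverse (1 + u • A) * γ⁻¹) i j := by
    intro i j
    funext u
    rw [Matrix.mul_inv_rev, sq, Matrix.mul_inv_rev, Matrix.nonsing_inv_eq_ringInverse,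
      Matrix.mul_assoc]
  -- Step 2: compute the entrywise integral.
  have hof : (Matrix.of fun i j : Fin n =>
        ∫ u in (0 : ℝ)..ρ, ((γ * (1 + u • A) ^ 2)⁻¹ : Matrix (Fin n) (Fin n) ℝ) i j)
      = (ρ • Ring.inverse (1 + ρ • A)) * γ⁻¹ := by
    ext i j
    rw [Matrix.of_apply, hintg i j, entry_integral A γ⁻¹ hρ hu i j]
  rw [hof]
  -- Step 3: the main algebraic identity.
  set S := ∑ m ∈ Finset.range n, ρ ^ m • newtonT A m with hS
  have hSB : S * (1 + ρ • A) = (1 + ρ • A).det • 1 := by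
    have h := key_ident A ρ n
    rw [newtonT_dim, smul_zero, add_zero] at h
    rw [hS, h, det_expand, ← Finset.sum_smul]
  have hSinv : S = (1 + ρ • A).det • Ring.inverse (1 + ρ • A) := by
    have hBr : (1 + ρ • A) * Ring.inverse (1 + ρ • A) = 1 := Ring.mul_inverse_cancel _ hB
    calc S = S * ((1 + ρ • A) * Ring.inverse (1 + ρ • A)) := by rw [hBr, Matrix.mul_one]
      _ = (S * (1 + ρ • A)) * Ring.inverse (1 + ρ • A) := by rw [Matrix.mul_assoc]
      _ = ((1 + ρ • A).det • 1) * Ring.inverse (1 + ρ • A) := by rw [hSB]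
      _ = (1 + ρ • A).det • Ring.inverse (1 + ρ • A) := by
          rw [Matrix.smul_mul, Matrix.one_mul]
  -- Step 4: reindex the sum.
  have hreindex : ∑ k ∈ Finset.Icc 1 n, ρ ^ k • newtonT A (k - 1) = ρ • S := by
    rw [← Finset.Ico_add_one_right_eq_Icc, Finset.sum_Ico_eq_sum_range]
    simp only [Nat.add_sub_cancel, Nat.add_sub_cancel_left]
    rw [hS, Finset.smul_sum]
    apply Finset.sum_congr rfl
    intro m _
    rw [smul_smul, ← pow_succ', Nat.add_comm 1 m]
  rw [hreindex]
  simp only [hSinv, Matrix.smul_mul]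
  rw [smul_comm]
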